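/- Let M and M′ be submonoids of the additive monoid ℚ₊ of nonnegative rational numbers that are isomorphic as additive monoids. Then M is difference-closed if and only if M′ is difference-closed. -/
import Mathlib

/-- `M` is difference-closed: for any `a, b ∈ M` with `b ≤ a`, `a - b ∈ M`. -/
def DifferenceClosed (M : AddSubmonoid ℚ) : Prop :=
  ∀ a ∈ M, ∀ b ∈ M, b ≤ a → a - b ∈ M

lemma cross_lemma {M M' : AddSubmonoid ℚ} (hM : ∀ x ∈ M, (0 : ℚ) ≤ x)
    (e : M ≃+ M') (x y : M) :
    (y : ℚ) * ((e x : M') : ℚ) = (x : ℚ) * ((e y : M') : ℚ) := by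
  rcases eq_or_lt_of_le (hM x x.2) with hx | hx
  · have hx0 : x = 0 := by ext; exact hx.symm
    subst hx0; simp
  rcases eq_or_lt_of_le (hM y y.2) with hy | hy
  · have hy0 : y = 0 := by ext; exact hy.symm
    subst hy0; simp
  set qx : ℚ := (x : ℚ) with hqx
  set qy : ℚ := (y : ℚ) with hqy
  have hnx : 0 < qx.num := Rat.num_pos.mpr hx
  have hny : 0 < qy.num := Rat.num_pos.mpr hy
  set m : ℕ := qx.den * qy.num.toNat with hm
  set n : ℕ := qy.den * qx.num.toNat with hn
  have hdx : (qx.den : ℚ) * qx = qx.num := by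
    rw [mul_comm]
    exact_mod_cast Rat.mul_den_eq_num qx
  have hdy : (qy.den : ℚ) * qy = qy.num := by
    rw [mul_comm]
    exact_mod_cast Rat.mul_den_eq_num qy
  have htx : ((qx.num.toNat : ℕ) : ℚ) = (qx.num : ℚ) := by
    exact_mod_cast Int.toNat_of_nonneg hnx.le
  have hty : ((qy.num.toNat : ℕ) : ℚ) = (qy.num : ℚ) := by
    exact_mod_cast Int.toNat_of_nonneg hny.le
  have hmx : (m : ℚ) * qx = (qy.num : ℚ) * qx.num := by
    push_cast [hm]
    rw [hty]
    calc (qx.den : ℚ) * qy.num * qx = qy.num * ((qx.den : ℚ) * qx) := by ring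
    _ = qy.num * qx.num := by rw [hdx]
  have hny' : (n : ℚ) * qy = (qy.num : ℚ) * qx.num := by
    push_cast [hn]
    rw [htx]
    calc (qy.den : ℚ) * qx.num * qy = qx.num * ((qy.den : ℚ) * qy) := by ring
    _ = qx.num * qy.num := by rw [hdy]
    _ = qy.num * qx.num := by ring
  have hsmul : m • x = n • y := by
    ext
    push_cast [nsmul_eq_mul]
    rw [← hqx, ← hqy, hmx, hny']
  have hsmul' : (m : ℚ) * ((e x : M') : ℚ) = (n : ℚ) * ((e y : M') : ℚ) := by
    have := congrArg e hsmul
    rw [map_nsmul, map_nsmul] at this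
    have := congrArg (fun z : M' => (z : ℚ)) this
    simpa [nsmul_eq_mul] using this
  -- from m * ex = n * ey with m = den x * num y, n = den y * num x, derive y*ex = x*ey
  have hxval : qx = (qx.num : ℚ) / qx.den := (Rat.num_div_den qx).symm
  have hyval : qy = (qy.num : ℚ) / qy.den := (Rat.num_div_den qy).symm
  have hdx0 : (qx.den : ℚ) ≠ 0 := by positivity
  have hdy0 : (qy.den : ℚ) ≠ 0 := by positivity
  rw [hxval, hyval]
  push_cast [hm, hn] at hsmul'
  rw [htx, hty] at hsmul'
  field_simp
  linear_combination hsmul'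


lemma transfer_dir {M M' : AddSubmonoid ℚ} (hM : ∀ x ∈ M, (0 : ℚ) ≤ x)
    (hM' : ∀ x ∈ M', (0 : ℚ) ≤ x) (e : M ≃+ M') (hDC : DifferenceClosed M) :
    DifferenceClosed M' := by
  intro a' ha' b' hb' hle
  by_cases hb0 : b' = 0
  · simpa [hb0] using ha'
  have hb : 0 < b' := lt_of_le_of_ne (hM' b' hb') (Ne.symm hb0)
  have ha : 0 < a' := lt_of_lt_of_le hb hle
  set u : M' := ⟨a', ha'⟩ with hu
  set v : M' := ⟨b', hb'⟩ with hv
  set A : ℚ := ((e.symm u : M) : ℚ) with hA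
  set B : ℚ := ((e.symm v : M) : ℚ) with hB
  have hcross : (v : ℚ) * A = (u : ℚ) * B := cross_lemma hM' e.symm u v
  have hA0 : 0 ≤ A := hM _ (e.symm u).2
  have hB0 : 0 ≤ B := hM _ (e.symm v).2
  have hBA : B ≤ A := by
    have h1 : b' * A = a' * B := hcross
    nlinarith
  have hmem : A - B ∈ M := hDC A (e.symm u).2 B (e.symm v).2 hBA
  set d : M := ⟨A - B, hmem⟩ with hd
  have hsum : d + e.symm v = e.symm u := by
    ext
    push_cast
    ring
  have := congrArg e hsum
  rw [map_add] at this
  simp only [AddEquiv.apply_symm_apply] at this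
  have hcoe := congrArg (fun z : M' => (z : ℚ)) this
  simp only [AddSubmonoid.coe_add] at hcoe
  have : a' - b' = ((e d : M') : ℚ) := by
    linarith
  rw [this]
  exact (e d).2

theorem differenceClosed_iff_of_addEquiv (M M' : AddSubmonoid ℚ)
    (hM : ∀ x ∈ M, (0 : ℚ) ≤ x) (hM' : ∀ x ∈ M', (0 : ℚ) ≤ x)
    (h : Nonempty (M ≃+ M')) :
    DifferenceClosed M ↔ DifferenceClosed M' := by
  obtain ⟨e⟩ := h
  exact ⟨transfer_dir hM hM' e, transfer_dir hM' hM e.symm⟩
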